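/- arXiv:2510.26079 — 2 statements merged into one kernel-verified Lean document; each statement's English description precedes it below -/
import Mathlib

section
/- (Product formula.) Let m₁, m₂, e₁, e₂ be integers with e₁ ≥ 0 and e₂ ≥ 0. Then I_Δ(m₁,e₁) · I_Δ(m₂,e₂) = u^{-(m₁e₁ + m₂e₂)} · ((q^{e₁+1};q)_∞ · (q^{e₂+1};q)_∞ / (q;q)_∞²) · Σ_{n=0}^{∞} [ (-1)^n · q^{-m₂n + n(n+1)/2} / ((q^{e₂+1};q)_n · (q;q)_n) · Σ_{j=0}^{n} ((q^{-n};q)_j · (q^{-n-e₂};q)_j / ((q^{e₁+1};q)_j · (q;q)_j)) · q^{j(n - m₁ + m₂ + e₂ + 1)} ], where the outer series converges absolutely and the inner sum is the terminating basic hypergeometric series ₂φ₁(q^{-n}, q^{-n-e₂}; q^{e₁+1}; q, q^{n - m₁ + m₂ + e₂ + 1}). -/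
open scoped BigOperators

/-- Finite q-Pochhammer symbol `(a;q)_n = ∏_{i=0}^{n-1} (1 - a q^i)`. -/
noncomputable def qPoch (a q : ℂ) (n : ℕ) : ℂ :=
  ∏ i ∈ Finset.range n, (1 - a * q ^ i)

/-- Infinite q-Pochhammer symbol `(a;q)_∞ = ∏_{i=0}^{∞} (1 - a q^i)`. -/
noncomputable def qPochInf (a q : ℂ) : ℂ :=
  ∏' i : ℕ, (1 - a * q ^ i)

/-- The `n`-th term of the series defining the tetrahedral index `I_Δ(m,e)`,
with `q = u^2` and vanishing below `e₊ = max(-e,0)`. -/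
noncomputable def tetTerm (u : ℂ) (m e : ℤ) (n : ℕ) : ℂ :=
  if (-e).toNat ≤ n then
    (-1 : ℂ) ^ n * u ^ ((n : ℤ) * ((n : ℤ) + 1) - (2 * (n : ℤ) + e) * m) /
      (qPoch (u ^ 2) (u ^ 2) n * qPoch (u ^ 2) (u ^ 2) ((n : ℤ) + e).toNat)
  else 0

/-- The tetrahedral index `I_Δ(m,e) = Σ_{n=e₊}^∞ (-1)^n u^{n(n+1)-(2n+e)m}/((q;q)_n (q;q)_{n+e})`. -/
noncomputable def tetIndex (u : ℂ) (m e : ℤ) : ℂ := ∑' n : ℕ, tetTerm u m e n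

section aux
variable {u q : ℂ}
open Filter Topology

lemma factor_ne_zero (hq1 : ‖q‖ < 1) {a : ℂ} (ha : ‖a‖ ≤ ‖q‖) (i : ℕ) :
    1 - a * q ^ i ≠ 0 := by
  have h1 : ‖a * q ^ i‖ < 1 := by
    calc ‖a * q ^ i‖ = ‖a‖ * ‖q‖ ^ i := by rw [norm_mul, norm_pow]
    _ ≤ ‖q‖ * 1 := by
        apply mul_le_mul ha (pow_le_one₀ (norm_nonneg q) hq1.le) (by positivity) (norm_nonneg q)
    _ < 1 := by simpa using hq1
  intro h
  rw [sub_eq_zero] at h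
  rw [← h] at h1
  simp at h1

lemma qPoch_ne_zero (hq1 : ‖q‖ < 1) {a : ℂ} (ha : ‖a‖ ≤ ‖q‖) (n : ℕ) :
    qPoch a q n ≠ 0 :=
  Finset.prod_ne_zero_iff.2 fun i _ => factor_ne_zero hq1 ha i

lemma norm_q_pow_le (hq1 : ‖q‖ < 1) (d : ℕ) : ‖q ^ (d + 1)‖ ≤ ‖q‖ := by
  rw [norm_pow]
  calc ‖q‖ ^ (d + 1) = ‖q‖ ^ d * ‖q‖ := by ring
  _ ≤ 1 * ‖q‖ := by
      apply mul_le_mul_of_nonneg_right (pow_le_one₀ (norm_nonneg q) hq1.le) (norm_nonneg q)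
  _ = ‖q‖ := one_mul _

lemma qPoch_split (q : ℂ) (E k : ℕ) :
    qPoch q q (E + k) = qPoch q q E * qPoch (q ^ (E + 1)) q k := by
  unfold qPoch
  rw [Finset.prod_range_add]
  congr 1
  apply Finset.prod_congr rfl
  intro i _
  rw [← pow_add, ← pow_succ']
  ring_nf

lemma qPoch_reflect' (q : ℂ) (M j : ℕ) :
    qPoch q q (M + j) = qPoch q q M * ∏ i ∈ Finset.range j, (1 - q ^ (M + j - i)) := by
  unfold qPoch
  rw [Finset.prod_range_add]
  congr 1
  rw [← Finset.prod_range_reflect]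
  apply Finset.prod_congr rfl
  intro i hi
  simp only [Finset.mem_range] at hi
  rw [← pow_succ']
  congr 2
  omega

lemma qPoch_reflect {N j : ℕ} (hj : j ≤ N) (q : ℂ) :
    qPoch q q N = qPoch q q (N - j) * ∏ i ∈ Finset.range j, (1 - q ^ (N - i)) := by
  have h := qPoch_reflect' q (N - j) j
  rw [show N - j + j = N by omega] at h
  exact h

lemma qPoch_neg_mul (hq0 : q ≠ 0) {N j : ℕ} (hj : j ≤ N) :
    q ^ (N * j) * qPoch (q ^ (-(N : ℤ))) q j
      = (-1) ^ j * q ^ (j * (j - 1) / 2) * ∏ i ∈ Finset.range j, (1 - q ^ (N - i)) := by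
  have key : ∀ i ∈ Finset.range j,
      q ^ N * (1 - q ^ (-(N : ℤ)) * q ^ i) = (-1) * (q ^ i * (1 - q ^ (N - i))) := by
    intro i hi
    simp only [Finset.mem_range] at hi
    have h1 : (q : ℂ) ^ N * q ^ (-(N : ℤ)) = 1 := by
      rw [← zpow_natCast q N, ← zpow_add₀ hq0]
      simp
    have h2 : q ^ i * q ^ (N - i) = q ^ N := by
      rw [← pow_add]; congr 1; omega
    calc q ^ N * (1 - q ^ (-(N : ℤ)) * q ^ i)
        = q ^ N - (q ^ N * q ^ (-(N : ℤ))) * q ^ i := by ring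
      _ = q ^ N - q ^ i := by rw [h1, one_mul]
      _ = (-1) * (q ^ i * (1 - q ^ (N - i))) := by rw [mul_sub, h2]; ring
  calc q ^ (N * j) * qPoch (q ^ (-(N : ℤ))) q j
      = ∏ i ∈ Finset.range j, (q ^ N * (1 - q ^ (-(N : ℤ)) * q ^ i)) := by
        rw [Finset.prod_mul_distrib, Finset.prod_const, Finset.card_range]
        unfold qPoch
        rw [← pow_mul]
    _ = ∏ i ∈ Finset.range j, ((-1) * (q ^ i * (1 - q ^ (N - i)))) :=
        Finset.prod_congr rfl key
    _ = (-1) ^ j * q ^ (j * (j - 1) / 2) * ∏ i ∈ Finset.range j, (1 - q ^ (N - i)) := by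
        rw [Finset.prod_mul_distrib, Finset.prod_mul_distrib, Finset.prod_const,
          Finset.prod_pow_eq_pow_sum, Finset.sum_range_id, Finset.card_range, mul_assoc]

lemma q_zpow_eq (hu : u ≠ 0) (hq : q = u ^ 2) (z : ℤ) : q ^ z = u ^ (2 * z) := by
  rw [hq, ← zpow_natCast u 2, ← zpow_mul]
  norm_num

lemma q_pow_eq (hu : u ≠ 0) (hq : q = u ^ 2) (k : ℕ) : q ^ k = u ^ (2 * (k : ℤ)) := by
  rw [← zpow_natCast q k, q_zpow_eq hu hq]

lemma qPoch_neg_eq (hu : u ≠ 0) (hq : q = u ^ 2) (hq1 : ‖q‖ < 1) {N j : ℕ} (hj : j ≤ N) :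
    qPoch (q ^ (-(N : ℤ))) q j
      = (-1) ^ j * u ^ (2 * ((j * (j - 1) / 2 : ℕ) : ℤ) - 2 * (N : ℤ) * j) *
          (qPoch q q N / qPoch q q (N - j)) := by
  have hq0 : q ≠ 0 := by rw [hq]; exact pow_ne_zero _ hu
  have hSNj : qPoch q q (N - j) ≠ 0 := qPoch_ne_zero hq1 le_rfl _
  have hprod : ∏ i ∈ Finset.range j, (1 - q ^ (N - i)) = qPoch q q N / qPoch q q (N - j) := by
    rw [eq_div_iff hSNj, qPoch_reflect hj]
    ring
  have h := qPoch_neg_mul hq0 hj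
  rw [hprod] at h
  have he : qPoch (q ^ (-(N : ℤ))) q j
      = (q ^ (N * j))⁻¹ * ((-1) ^ j * q ^ (j * (j - 1) / 2) * (qPoch q q N / qPoch q q (N - j))) := by
    rw [← h]
    field_simp
  have hgen : ∀ (A : ℂ) (x y : ℤ), (u ^ x)⁻¹ * ((-1 : ℂ) ^ j * u ^ y * A)
      = (-1) ^ j * u ^ (y - x) * A := by
    intro A x y
    rw [zpow_sub₀ hu]
    field_simp
  rw [he, q_pow_eq hu hq (N * j), q_pow_eq hu hq (j * (j - 1) / 2), hgen,
    show 2 * ((j * (j - 1) / 2 : ℕ) : ℤ) - 2 * ((N * j : ℕ) : ℤ)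
      = 2 * ((j * (j - 1) / 2 : ℕ) : ℤ) - 2 * (N : ℤ) * j by push_cast; ring]

open Filter Topology

lemma log_summable (hq1 : ‖q‖ < 1) {a : ℂ} (ha : ‖a‖ ≤ ‖q‖) :
    Summable (fun i : ℕ => Complex.log (1 - a * q ^ i)) := by
  obtain ⟨N, hN⟩ := exists_pow_lt_of_lt_one (show (0:ℝ) < 1/2 by norm_num) hq1
  rw [← summable_nat_add_iff N]
  have hg : Summable (fun i : ℕ => (3/2 : ℝ) * (‖q‖ ^ N * ‖q‖ ^ i)) :=
    ((summable_geometric_of_lt_one (norm_nonneg q) hq1).mul_left _).mul_left _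
  apply Summable.of_norm_bounded hg
  intro i
  have hz : ‖-(a * q ^ (i + N))‖ ≤ 1/2 := by
    rw [norm_neg, norm_mul, norm_pow]
    calc ‖a‖ * ‖q‖ ^ (i + N) ≤ 1 * ‖q‖ ^ (i + N) := by
          apply mul_le_mul_of_nonneg_right (le_trans ha hq1.le) (by positivity)
      _ = ‖q‖ ^ i * ‖q‖ ^ N := by rw [one_mul, pow_add]
      _ ≤ 1 * ‖q‖ ^ N := by
          apply mul_le_mul_of_nonneg_right (pow_le_one₀ (norm_nonneg q) hq1.le) (by positivity)
      _ ≤ 1/2 := by rw [one_mul]; exact hN.le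
  have hb := Complex.norm_log_one_add_half_le_self hz
  rw [show (1 : ℂ) + -(a * q ^ (i + N)) = 1 - a * q ^ (i + N) by ring] at hb
  calc ‖Complex.log (1 - a * q ^ (i + N))‖ ≤ 3/2 * ‖-(a * q ^ (i + N))‖ := hb
    _ ≤ 3/2 * (‖q‖ ^ N * ‖q‖ ^ i) := by
        rw [norm_neg, norm_mul, norm_pow]
        apply mul_le_mul_of_nonneg_left _ (by norm_num)
        calc ‖a‖ * ‖q‖ ^ (i + N) ≤ 1 * ‖q‖ ^ (i + N) := by
              apply mul_le_mul_of_nonneg_right (le_trans ha hq1.le) (by positivity)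
          _ = ‖q‖ ^ N * ‖q‖ ^ i := by rw [one_mul, pow_add]; ring

lemma multipliable_qp (hq1 : ‖q‖ < 1) {a : ℂ} (ha : ‖a‖ ≤ ‖q‖) :
    Multipliable (fun i : ℕ => 1 - a * q ^ i) :=
  Complex.multipliable_of_summable_log (log_summable hq1 ha)

lemma qPochInf_ne_zero (hq1 : ‖q‖ < 1) {a : ℂ} (ha : ‖a‖ ≤ ‖q‖) :
    qPochInf a q ≠ 0 := by
  have h : Complex.exp (∑' i : ℕ, Complex.log (1 - a * q ^ i)) = ∏' i : ℕ, (1 - a * q ^ i) :=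
    Complex.cexp_tsum_eq_tprod (f := fun i : ℕ => 1 - a * q ^ i)
      (fun i => factor_ne_zero hq1 ha i) (log_summable hq1 ha)
  rw [qPochInf, ← h]
  exact Complex.exp_ne_zero _

lemma qPochInf_split (hq1 : ‖q‖ < 1) (E : ℕ) :
    qPochInf q q = qPoch q q E * qPochInf (q ^ (E + 1)) q := by
  have hfe : (fun i : ℕ => 1 - q * q ^ (i + E)) = fun i : ℕ => 1 - q ^ (E + 1) * q ^ i := by
    funext i
    rw [pow_add, pow_succ']
    ring
  have h2 : Multipliable fun i : ℕ => 1 - q * q ^ (i + E) := by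
    rw [hfe]
    exact multipliable_qp hq1 (norm_q_pow_le hq1 E)
  have h := Multipliable.prod_mul_tprod_nat_mul' (f := fun i : ℕ => 1 - q * q ^ i) (k := E) h2
  rw [hfe] at h
  exact h.symm

lemma qPoch_norm_lower (hq1 : ‖q‖ < 1) :
    ∃ c : ℝ, 0 < c ∧ ∀ n, c ≤ ‖qPoch q q n‖ := by
  have hm : Multipliable (fun i : ℕ => 1 - q * q ^ i) := multipliable_qp hq1 le_rfl
  have hL : (0:ℝ) < ‖qPochInf q q‖ := by
    simpa [norm_pos_iff] using qPochInf_ne_zero hq1 (le_refl ‖q‖)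
  have ht : Tendsto (fun n => ‖qPoch q q n‖) atTop (𝓝 ‖qPochInf q q‖) := by
    have := hm.hasProd.tendsto_prod_nat
    exact (this.norm : _)
  have hev : ∀ᶠ n in atTop, ‖qPochInf q q‖ / 2 < ‖qPoch q q n‖ :=
    ht.eventually_const_lt (by linarith)
  obtain ⟨N, hN⟩ := eventually_atTop.1 hev
  classical
  set F : Finset ℝ := insert (‖qPochInf q q‖ / 2)
    ((Finset.range (N + 1)).image fun k => ‖qPoch q q k‖) with hF
  have hFne : F.Nonempty := ⟨_, Finset.mem_insert_self _ _⟩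
  refine ⟨F.min' hFne, ?_, ?_⟩
  · rw [Finset.lt_min'_iff]
    intro y hy
    rw [hF] at hy
    rcases Finset.mem_insert.1 hy with h | h
    · rw [h]; linarith
    · obtain ⟨k, _, rfl⟩ := Finset.mem_image.1 h
      simpa [norm_pos_iff] using qPoch_ne_zero hq1 (le_refl ‖q‖) k
  · intro n
    rcases le_or_gt n N with h | h
    · apply Finset.min'_le
      rw [hF]
      exact Finset.mem_insert_of_mem (Finset.mem_image.2 ⟨n, Finset.mem_range.2 (by omega), rfl⟩)
    · calc F.min' hFne ≤ ‖qPochInf q q‖ / 2 := Finset.min'_le _ _ (Finset.mem_insert_self _ _)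
        _ ≤ ‖qPoch q q n‖ := (hN n (by omega)).le

lemma qPoch_split' (q : ℂ) (k E : ℕ) :
    qPoch q q (k + E) = qPoch q q E * qPoch (q ^ (E + 1)) q k := by
  rw [add_comm]; exact qPoch_split q E k

lemma tetTerm_nonneg (hq : q = u ^ 2) (m : ℤ) (E k : ℕ) :
    tetTerm u m (E : ℤ) k
      = (-1) ^ k * u ^ ((k : ℤ) * ((k : ℤ) + 1) - (2 * (k : ℤ) + (E : ℤ)) * m) /
          (qPoch q q k * qPoch q q (k + E)) := by
  unfold tetTerm
  rw [if_pos (by omega : (-(E : ℤ)).toNat ≤ k), ← hq,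
    show (((k : ℤ) + (E : ℤ)).toNat) = k + E by omega]


lemma lhs_alg (n : ℕ) (w₁ w₂ w₄ Sj Sl Sn SE₂ T1j T2n T2l : ℂ)
    (hSj : Sj ≠ 0) (hSl : Sl ≠ 0) (hSn : Sn ≠ 0) (hSE₂ : SE₂ ≠ 0)
    (hT1 : T1j ≠ 0) (hT2n : T2n ≠ 0) (hT2l : T2l ≠ 0) :
    (-1 : ℂ) ^ n * w₁ / (T2n * Sn) *
        (w₂ * (Sn / Sl * (SE₂ * T2n / (SE₂ * T2l))) / (T1j * Sj) * w₄)
      = (-1) ^ n * (w₁ * w₂ * w₄) / (Sj * T1j * (Sl * T2l)) := by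
  field_simp

lemma rhs_alg (j l : ℕ) (v₁ v₂ v₃ Sj Sl SE₁ SE₂ T1j T2l : ℂ)
    (hSj : Sj ≠ 0) (hSl : Sl ≠ 0) (hSE₁ : SE₁ ≠ 0) (hSE₂ : SE₂ ≠ 0)
    (hT1 : T1j ≠ 0) (hT2l : T2l ≠ 0) :
    (-1 : ℂ) ^ j * v₁ / (Sj * (SE₁ * T1j)) * ((-1 : ℂ) ^ l * v₂ / (Sl * (SE₂ * T2l))) *
        (SE₁ * SE₂ * v₃)
      = (-1) ^ (j + l) * (v₁ * v₂ * v₃) / (Sj * T1j * (Sl * T2l)) := by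
  rw [pow_add]
  field_simp

lemma perTerm (hu : u ≠ 0) (hq : q = u ^ 2) (hq1 : ‖q‖ < 1)
    (m₁ m₂ : ℤ) (E₁ E₂ n j : ℕ) (hj : j ≤ n) :
    (-1 : ℂ) ^ n * q ^ (-m₂ * (n : ℤ) + ((n * (n + 1) / 2 : ℕ) : ℤ)) /
        (qPoch (q ^ ((E₂ : ℤ) + 1)) q n * qPoch q q n) *
      (qPoch (q ^ (-(n : ℤ))) q j * qPoch (q ^ (-(n : ℤ) - (E₂ : ℤ))) q j /
          (qPoch (q ^ ((E₁ : ℤ) + 1)) q j * qPoch q q j) *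
        q ^ ((j : ℤ) * ((n : ℤ) - m₁ + m₂ + (E₂ : ℤ) + 1)))
    = tetTerm u m₁ (E₁ : ℤ) j * tetTerm u m₂ (E₂ : ℤ) (n - j) *
        (qPoch q q E₁ * qPoch q q E₂ * u ^ (m₁ * (E₁ : ℤ) + m₂ * (E₂ : ℤ))) := by
  have hq0 : q ≠ 0 := by rw [hq]; exact pow_ne_zero _ hu
  have hSne : ∀ k, qPoch q q k ≠ 0 := fun k => qPoch_ne_zero hq1 le_rfl k
  have hT1 : qPoch (q ^ (E₁ + 1)) q j ≠ 0 := qPoch_ne_zero hq1 (norm_q_pow_le hq1 E₁) j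
  have hT2n : qPoch (q ^ (E₂ + 1)) q n ≠ 0 := qPoch_ne_zero hq1 (norm_q_pow_le hq1 E₂) n
  have hT2l : qPoch (q ^ (E₂ + 1)) q (n - j) ≠ 0 := qPoch_ne_zero hq1 (norm_q_pow_le hq1 E₂) _
  have hcast₁ : q ^ ((E₁ : ℤ) + 1) = q ^ (E₁ + 1) := by
    rw [show ((E₁ : ℤ) + 1) = ((E₁ + 1 : ℕ) : ℤ) by push_cast; ring, zpow_natCast]
  have hcast₂ : q ^ ((E₂ : ℤ) + 1) = q ^ (E₂ + 1) := by
    rw [show ((E₂ : ℤ) + 1) = ((E₂ + 1 : ℕ) : ℤ) by push_cast; ring, zpow_natCast]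
  have hj₂ : j ≤ n + E₂ := le_trans hj (Nat.le_add_right _ _)
  -- combined lemma for the two negative-argument Pochhammers
  set X₁ : ℤ := 2 * ((j * (j - 1) / 2 : ℕ) : ℤ) - 2 * (n : ℤ) * j with hX₁
  set X₂ : ℤ := 2 * ((j * (j - 1) / 2 : ℕ) : ℤ) - 2 * ((n + E₂ : ℕ) : ℤ) * j with hX₂
  have hnn : qPoch (q ^ (-(n : ℤ))) q j * qPoch (q ^ (-(n : ℤ) - (E₂ : ℤ))) q j
      = u ^ (X₁ + X₂) *
          ((qPoch q q n / qPoch q q (n - j)) *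
            ((qPoch q q E₂ * qPoch (q ^ (E₂ + 1)) q n) /
              (qPoch q q E₂ * qPoch (q ^ (E₂ + 1)) q (n - j)))) := by
    rw [show (-(n : ℤ) - (E₂ : ℤ)) = -((n + E₂ : ℕ) : ℤ) by push_cast; ring]
    rw [qPoch_neg_eq hu hq hq1 hj, qPoch_neg_eq hu hq hq1 hj₂,
      show n + E₂ - j = (n - j) + E₂ by omega, qPoch_split' q n E₂, qPoch_split' q (n - j) E₂,
      zpow_add₀ hu]
    have htt : ((-1 : ℂ) ^ j) * ((-1 : ℂ) ^ j) = 1 := by rw [← mul_pow]; norm_num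
    linear_combination (u ^ X₁ * (qPoch q q n / qPoch q q (n - j)) * u ^ X₂ *
      ((qPoch q q E₂ * qPoch (q ^ (E₂ + 1)) q n) /
        (qPoch q q E₂ * qPoch (q ^ (E₂ + 1)) q (n - j)))) * htt
  have lhs_red : (-1 : ℂ) ^ n * q ^ (-m₂ * (n : ℤ) + ((n * (n + 1) / 2 : ℕ) : ℤ)) /
        (qPoch (q ^ ((E₂ : ℤ) + 1)) q n * qPoch q q n) *
      (qPoch (q ^ (-(n : ℤ))) q j * qPoch (q ^ (-(n : ℤ) - (E₂ : ℤ))) q j /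
          (qPoch (q ^ ((E₁ : ℤ) + 1)) q j * qPoch q q j) *
        q ^ ((j : ℤ) * ((n : ℤ) - m₁ + m₂ + (E₂ : ℤ) + 1)))
      = (-1) ^ n * (u ^ (2 * (-m₂ * (n : ℤ) + ((n * (n + 1) / 2 : ℕ) : ℤ))) * u ^ (X₁ + X₂) *
            u ^ (2 * ((j : ℤ) * ((n : ℤ) - m₁ + m₂ + (E₂ : ℤ) + 1)))) /
          (qPoch q q j * qPoch (q ^ (E₁ + 1)) q j *
            (qPoch q q (n - j) * qPoch (q ^ (E₂ + 1)) q (n - j))) := by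
    rw [hcast₁, hcast₂, hnn, q_zpow_eq hu hq, q_zpow_eq hu hq]
    exact lhs_alg n _ _ _ _ _ _ _ _ _ _ (hSne j) (hSne (n - j)) (hSne n) (hSne E₂)
      hT1 hT2n hT2l
  have rhs_red : tetTerm u m₁ (E₁ : ℤ) j * tetTerm u m₂ (E₂ : ℤ) (n - j) *
        (qPoch q q E₁ * qPoch q q E₂ * u ^ (m₁ * (E₁ : ℤ) + m₂ * (E₂ : ℤ)))
      = (-1) ^ n * (u ^ ((j : ℤ) * ((j : ℤ) + 1) - (2 * (j : ℤ) + (E₁ : ℤ)) * m₁) *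
            u ^ ((((n - j : ℕ) : ℤ)) * ((((n - j : ℕ) : ℤ)) + 1) -
              (2 * (((n - j : ℕ) : ℤ)) + (E₂ : ℤ)) * m₂) *
            u ^ (m₁ * (E₁ : ℤ) + m₂ * (E₂ : ℤ))) /
          (qPoch q q j * qPoch (q ^ (E₁ + 1)) q j *
            (qPoch q q (n - j) * qPoch (q ^ (E₂ + 1)) q (n - j))) := by
    rw [tetTerm_nonneg hq m₁ E₁ j, tetTerm_nonneg hq m₂ E₂ (n - j),
      qPoch_split' q j E₁, qPoch_split' q (n - j) E₂,
      rhs_alg j (n - j) _ _ _ _ _ _ _ _ _ (hSne j) (hSne (n - j)) (hSne E₁) (hSne E₂) hT1 hT2l,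
      show j + (n - j) = n by omega]
  rw [lhs_red, rhs_red]
  simp only [← zpow_add₀ hu]
  have hexp : (2 * (-m₂ * (n : ℤ) + ((n * (n + 1) / 2 : ℕ) : ℤ)) + (X₁ + X₂) +
        2 * ((j : ℤ) * ((n : ℤ) - m₁ + m₂ + (E₂ : ℤ) + 1)))
      = (((j : ℤ) * ((j : ℤ) + 1) - (2 * (j : ℤ) + (E₁ : ℤ)) * m₁) +
          ((((n - j : ℕ) : ℤ)) * ((((n - j : ℕ) : ℤ)) + 1) -
            (2 * (((n - j : ℕ) : ℤ)) + (E₂ : ℤ)) * m₂) +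
          (m₁ * (E₁ : ℤ) + m₂ * (E₂ : ℤ))) := by
    have h2 : ((n * (n + 1) / 2 : ℕ) : ℤ) * 2 = (n : ℤ) * ((n : ℤ) + 1) := by
      have := Nat.div_mul_cancel (Nat.even_mul_succ_self n).two_dvd
      exact_mod_cast this
    have h1 : ((j * (j - 1) / 2 : ℕ) : ℤ) * 2 = (j : ℤ) * ((j : ℤ) - 1) := by
      have hev : Even (j * (j - 1)) := by
        rcases Nat.even_or_odd j with h | h
        · exact h.mul_right _
        · have hje : Even (j - 1) := by rcases h with ⟨t, ht⟩; exact ⟨t, by omega⟩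
          exact hje.mul_left _
      have := Nat.div_mul_cancel hev.two_dvd
      have h' : ((j * (j - 1) / 2 : ℕ) : ℤ) * 2 = ((j : ℤ)) * ((j - 1 : ℕ) : ℤ) := by
        exact_mod_cast this
      rcases Nat.eq_zero_or_pos j with h0 | h0
      · subst h0; simp
      · rw [h']; congr 1; omega
    rw [hX₁, hX₂]
    have hc : (((n - j : ℕ)) : ℤ) = (n : ℤ) - (j : ℤ) := by omega
    have hc2 : (((n + E₂ : ℕ)) : ℤ) = (n : ℤ) + (E₂ : ℤ) := by push_cast; ring
    rw [hc, hc2]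
    linear_combination h2 + 2 * h1
  rw [hexp]

lemma summable_tetTerm (hu : u ≠ 0) (hu1 : ‖u‖ < 1) (hq : q = u ^ 2) (hq1 : ‖q‖ < 1)
    (m : ℤ) (E : ℕ) : Summable (fun n => ‖tetTerm u m (E : ℤ) n‖) := by
  obtain ⟨c, hc, hcle⟩ := qPoch_norm_lower hq1
  have hu0 : 0 < ‖u‖ := norm_pos_iff.2 hu
  set A : ℤ := (m.natAbs : ℤ) with hA
  have hAm : m ≤ A := Int.le_natAbs
  have hA0 : 0 ≤ A := Int.natCast_nonneg _
  set N₀ : ℕ := 2 * m.natAbs + E * m.natAbs + 1 with hN₀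
  have hZ : ∀ n : ℕ, N₀ ≤ n →
      (n : ℤ) ≤ (n : ℤ) * ((n : ℤ) + 1) - (2 * (n : ℤ) + (E : ℤ)) * m := by
    intro n hn
    have hn' : (2 : ℤ) * A + (E : ℤ) * A + 1 ≤ (n : ℤ) := by
      rw [hN₀] at hn
      zify at hn
      push_cast at hn
      rw [hA, Int.natCast_natAbs]
      linarith
    have hE0 : (0 : ℤ) ≤ (E : ℤ) := Int.natCast_nonneg _
    have hn0 : (1 : ℤ) ≤ (n : ℤ) := by nlinarith
    nlinarith [mul_le_mul_of_nonneg_left hAm (show (0:ℤ) ≤ 2 * (n:ℤ) + E by nlinarith),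
      mul_le_mul_of_nonneg_left hn' (show (0:ℤ) ≤ (n:ℤ) by nlinarith),
      mul_nonneg (mul_nonneg hE0 hA0) (sub_nonneg.2 hn0)]
  apply Summable.of_norm_bounded_eventually_nat (g := fun n => c⁻¹ * c⁻¹ * ‖u‖ ^ n)
  · exact (summable_geometric_of_lt_one hu0.le hu1).mul_left _
  · filter_upwards [Filter.eventually_atTop.2 ⟨N₀, fun n hn => hn⟩] with n hn
    rw [norm_norm, tetTerm_nonneg hq m E n]
    rw [norm_div, norm_mul, norm_mul, norm_zpow]
    have h1 : ‖(-1 : ℂ) ^ n‖ = 1 := by simp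
    rw [h1, one_mul]
    have hden : c * c ≤ ‖qPoch q q n‖ * ‖qPoch q q (n + E)‖ :=
      mul_le_mul (hcle n) (hcle (n + E)) hc.le (norm_nonneg _)
    have hnum : ‖u‖ ^ ((n : ℤ) * ((n : ℤ) + 1) - (2 * (n : ℤ) + (E : ℤ)) * m) ≤ ‖u‖ ^ n := by
      rw [← zpow_natCast ‖u‖ n]
      exact zpow_le_zpow_right_of_le_one₀ hu0 hu1.le (hZ n hn)
    calc ‖u‖ ^ ((n : ℤ) * ((n : ℤ) + 1) - (2 * (n : ℤ) + (E : ℤ)) * m) /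
          (‖qPoch q q n‖ * ‖qPoch q q (n + E)‖)
        ≤ ‖u‖ ^ n / (c * c) := by
          apply div_le_div₀ (by positivity) hnum (by positivity) hden
      _ = c⁻¹ * c⁻¹ * ‖u‖ ^ n := by
          field_simp
          try ring

end aux

/-- product formula: for `e₁, e₂ ≥ 0`,
`I_Δ(m₁,e₁) I_Δ(m₂,e₂) = q^{-(m₁e₁+m₂e₂)/2} ((q^{e₁+1};q)_∞ (q^{e₂+1};q)_∞/(q;q)_∞²) ·
 Σ_{n≥0} (-1)^n q^{-m₂n + n(n+1)/2}/((q^{e₂+1};q)_n (q;q)_n) ·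
   ₂φ₁(q^{-n}, q^{-n-e₂}; q^{e₁+1}; q, q^{n-m₁+m₂+e₂+1})`,
with the outer series absolutely convergent; here `u = q^{1/2}`. -/
theorem stmt_14 (u : ℂ) (hu0 : 0 < ‖u‖) (hu1 : ‖u‖ < 1) (q : ℂ) (hq : q = u ^ 2)
    (m₁ m₂ e₁ e₂ : ℤ) (he₁ : 0 ≤ e₁) (he₂ : 0 ≤ e₂) :
    Summable (fun n : ℕ =>
      ‖(-1 : ℂ) ^ n * q ^ (-m₂ * n + ((n * (n + 1) / 2 : ℕ) : ℤ)) /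
          (qPoch (q ^ (e₂ + 1)) q n * qPoch q q n) *
        ∑ j ∈ Finset.range (n + 1),
          qPoch (q ^ (-(n : ℤ))) q j * qPoch (q ^ (-(n : ℤ) - e₂)) q j /
            (qPoch (q ^ (e₁ + 1)) q j * qPoch q q j) *
          q ^ ((j : ℤ) * ((n : ℤ) - m₁ + m₂ + e₂ + 1))‖) ∧
    tetIndex u m₁ e₁ * tetIndex u m₂ e₂ =
      u ^ (-(m₁ * e₁ + m₂ * e₂)) *
        (qPochInf (q ^ (e₁ + 1)) q * qPochInf (q ^ (e₂ + 1)) q / (qPochInf q q) ^ 2) *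
        ∑' n : ℕ, (-1 : ℂ) ^ n * q ^ (-m₂ * n + ((n * (n + 1) / 2 : ℕ) : ℤ)) /
            (qPoch (q ^ (e₂ + 1)) q n * qPoch q q n) *
          ∑ j ∈ Finset.range (n + 1),
            qPoch (q ^ (-(n : ℤ))) q j * qPoch (q ^ (-(n : ℤ) - e₂)) q j /
              (qPoch (q ^ (e₁ + 1)) q j * qPoch q q j) *
            q ^ ((j : ℤ) * ((n : ℤ) - m₁ + m₂ + e₂ + 1)) := by
  lift e₁ to ℕ using he₁ with E₁
  lift e₂ to ℕ using he₂ with E₂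
  have hu : u ≠ 0 := norm_pos_iff.1 hu0
  have hq1 : ‖q‖ < 1 := by
    rw [hq, norm_pow]
    exact pow_lt_one₀ (norm_nonneg u) hu1 (by norm_num)
  have hq0 : q ≠ 0 := by rw [hq]; exact pow_ne_zero _ hu
  have hSne : ∀ k, qPoch q q k ≠ 0 := fun k => qPoch_ne_zero hq1 le_rfl k
  have ha : Summable (fun n => ‖tetTerm u m₁ (E₁ : ℤ) n‖) :=
    summable_tetTerm hu hu1 hq hq1 m₁ E₁
  have hb : Summable (fun n => ‖tetTerm u m₂ (E₂ : ℤ) n‖) :=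
    summable_tetTerm hu hu1 hq hq1 m₂ E₂
  set D : ℂ := qPoch q q E₁ * qPoch q q E₂ * u ^ (m₁ * (E₁ : ℤ) + m₂ * (E₂ : ℤ)) with hD
  -- the key pointwise identity
  have hF : ∀ n : ℕ,
      (-1 : ℂ) ^ n * q ^ (-m₂ * n + ((n * (n + 1) / 2 : ℕ) : ℤ)) /
          (qPoch (q ^ ((E₂ : ℤ) + 1)) q n * qPoch q q n) *
        ∑ j ∈ Finset.range (n + 1),
          qPoch (q ^ (-(n : ℤ))) q j * qPoch (q ^ (-(n : ℤ) - (E₂ : ℤ))) q j /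
            (qPoch (q ^ ((E₁ : ℤ) + 1)) q j * qPoch q q j) *
          q ^ ((j : ℤ) * ((n : ℤ) - m₁ + m₂ + (E₂ : ℤ) + 1))
      = (∑ kl ∈ Finset.HasAntidiagonal.antidiagonal n,
          tetTerm u m₁ (E₁ : ℤ) kl.1 * tetTerm u m₂ (E₂ : ℤ) kl.2) * D := by
    intro n
    rw [Finset.Nat.sum_antidiagonal_eq_sum_range_succ_mk, Finset.sum_mul, Finset.mul_sum]
    apply Finset.sum_congr rfl
    intro j hj
    have hjn : j ≤ n := by simpa [Nat.lt_succ_iff] using Finset.mem_range.1 hj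
    exact perTerm hu hq hq1 m₁ m₂ E₁ E₂ n j hjn
  have hs := summable_norm_sum_mul_antidiagonal_of_summable_norm ha hb
  constructor
  · apply (hs.mul_right ‖D‖).congr
    intro n
    rw [← norm_mul, ← hF n]
  · -- infinite product prefactor
    have hcast₁ : q ^ ((E₁ : ℤ) + 1) = q ^ (E₁ + 1) := by
      rw [show ((E₁ : ℤ) + 1) = ((E₁ + 1 : ℕ) : ℤ) by push_cast; ring, zpow_natCast]
    have hcast₂ : q ^ ((E₂ : ℤ) + 1) = q ^ (E₂ + 1) := by
      rw [show ((E₂ : ℤ) + 1) = ((E₂ + 1 : ℕ) : ℤ) by push_cast; ring, zpow_natCast]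
    have hQ₁ : qPochInf (q ^ (E₁ + 1)) q ≠ 0 :=
      qPochInf_ne_zero hq1 (norm_q_pow_le hq1 E₁)
    have hQ₂ : qPochInf (q ^ (E₂ + 1)) q ≠ 0 :=
      qPochInf_ne_zero hq1 (norm_q_pow_le hq1 E₂)
    have hone : u ^ (-(m₁ * (E₁ : ℤ) + m₂ * (E₂ : ℤ))) *
        (qPochInf (q ^ ((E₁ : ℤ) + 1)) q * qPochInf (q ^ ((E₂ : ℤ) + 1)) q /
          (qPochInf q q) ^ 2) * D = 1 := by
      rw [hcast₁, hcast₂, hD, sq]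
      nth_rewrite 1 [qPochInf_split hq1 E₁]
      rw [qPochInf_split hq1 E₂, zpow_neg]
      field_simp [hSne E₁, hSne E₂, hQ₁, hQ₂, zpow_ne_zero _ hu]
    calc tetIndex u m₁ (E₁ : ℤ) * tetIndex u m₂ (E₂ : ℤ)
        = (∑' n, tetTerm u m₁ (E₁ : ℤ) n) * (∑' n, tetTerm u m₂ (E₂ : ℤ) n) := rfl
      _ = ∑' n : ℕ, ∑ kl ∈ Finset.HasAntidiagonal.antidiagonal n,
            tetTerm u m₁ (E₁ : ℤ) kl.1 * tetTerm u m₂ (E₂ : ℤ) kl.2 :=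
          tsum_mul_tsum_eq_tsum_sum_antidiagonal_of_summable_norm ha hb
      _ = (∑' n : ℕ, ∑ kl ∈ Finset.HasAntidiagonal.antidiagonal n,
            tetTerm u m₁ (E₁ : ℤ) kl.1 * tetTerm u m₂ (E₂ : ℤ) kl.2) *
            (u ^ (-(m₁ * (E₁ : ℤ) + m₂ * (E₂ : ℤ))) *
              (qPochInf (q ^ ((E₁ : ℤ) + 1)) q * qPochInf (q ^ ((E₂ : ℤ) + 1)) q /
                (qPochInf q q) ^ 2) * D) := by rw [hone, mul_one]
      _ = u ^ (-(m₁ * (E₁ : ℤ) + m₂ * (E₂ : ℤ))) *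
            (qPochInf (q ^ ((E₁ : ℤ) + 1)) q * qPochInf (q ^ ((E₂ : ℤ) + 1)) q /
              (qPochInf q q) ^ 2) *
            ((∑' n : ℕ, ∑ kl ∈ Finset.HasAntidiagonal.antidiagonal n,
              tetTerm u m₁ (E₁ : ℤ) kl.1 * tetTerm u m₂ (E₂ : ℤ) kl.2) * D) := by ring
      _ = _ := by
          rw [← tsum_mul_right]
          congr 1
          exact (tsum_congr hF).symm
end

section
/- For every integer k, the series Σ_{n=0}^{∞} (-q^{-k})^n · I_Δ(k-n-1, k+n) converges and equals u^{k} · I_Δ(k, k), where u plays the role of q^{1/2} (so u^{k} = q^{k/2}). -/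
open scoped BigOperators

/-- Weierstrass-type inequality. -/
lemma aux_one_sub_sum_le_prod (s : Finset ℕ) (a : ℕ → ℝ) (h0 : ∀ i, 0 ≤ a i)
    (h1 : ∀ i, a i ≤ 1) : 1 - ∑ i ∈ s, a i ≤ ∏ i ∈ s, (1 - a i) := by
  classical
  induction s using Finset.cons_induction with
  | empty => simp
  | cons i s hi ih =>
    rw [Finset.prod_cons, Finset.sum_cons]
    have hs0 : 0 ≤ ∑ j ∈ s, a j := Finset.sum_nonneg fun j _ => h0 j
    have hp0 : 0 ≤ ∏ j ∈ s, (1 - a j) := Finset.prod_nonneg fun j _ => by linarith [h1 j]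
    nlinarith [h0 i, h1 i, mul_le_mul_of_nonneg_left ih (by linarith [h1 i] : (0:ℝ) ≤ 1 - a i)]

lemma aux_exists_pos {x : ℝ} (hx0 : 0 ≤ x) (hx1 : x < 1) :
    ∃ c : ℝ, 0 < c ∧ ∀ m : ℕ, c ≤ ∏ i ∈ Finset.range m, (1 - x ^ (i + 1)) := by
  obtain ⟨M, hM⟩ : ∃ M : ℕ, x ^ M < (1 - x) / 2 :=
    exists_pow_lt_of_lt_one (by linarith) hx1
  have hfac : ∀ i : ℕ, 0 < 1 - x ^ (i + 1) := fun i => by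
    have : x ^ (i + 1) < 1 := pow_lt_one₀ hx0 hx1 (Nat.succ_ne_zero i)
    linarith
  have hfac1 : ∀ i : ℕ, 1 - x ^ (i + 1) ≤ 1 := fun i => by
    have : 0 ≤ x ^ (i + 1) := pow_nonneg hx0 _
    linarith
  set c0 : ℝ := ∏ i ∈ Finset.range M, (1 - x ^ (i + 1)) with hc0
  have hc0pos : 0 < c0 := Finset.prod_pos fun i _ => hfac i
  refine ⟨c0 / 2, by positivity, fun m => ?_⟩
  rcases le_total m M with h | h
  · have : c0 ≤ ∏ i ∈ Finset.range m, (1 - x ^ (i + 1)) := by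
      rw [hc0, ← Finset.prod_range_mul_prod_Ico _ h]
      have h2 : ∏ i ∈ Finset.Ico m M, (1 - x ^ (i + 1)) ≤ 1 :=
        Finset.prod_le_one (fun i _ => (hfac i).le) (fun i _ => hfac1 i)
      nlinarith [Finset.prod_pos (fun i (_ : i ∈ Finset.range m) => hfac i)]
    linarith
  · -- m ≥ M
    have hsum : ∑ i ∈ Finset.Ico M m, x ^ (i + 1) ≤ 1 / 2 := by
      have e1 : ∑ i ∈ Finset.Ico M m, x ^ (i + 1)
          = ∑ j ∈ Finset.range (m - M), x ^ (M + j + 1) := by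
        rw [Finset.sum_Ico_eq_sum_range]
      have e2 : ∀ j, x ^ (M + j + 1) ≤ x ^ M * x ^ j := fun j => by
        have h6 : x ^ (M + j + 1) = x ^ M * x ^ j * x := by ring
        rw [h6]
        nlinarith [pow_nonneg hx0 M, pow_nonneg hx0 j,
          mul_nonneg (pow_nonneg hx0 M) (pow_nonneg hx0 j), hx1.le]
      have e3 : ∑ j ∈ Finset.range (m - M), x ^ (M + j + 1)
          ≤ x ^ M * ∑ j ∈ Finset.range (m - M), x ^ j := by
        rw [Finset.mul_sum]
        exact Finset.sum_le_sum fun j _ => e2 j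
      have e4 : ∑ j ∈ Finset.range (m - M), x ^ j ≤ 1 / (1 - x) := by
        have h5 := geom_sum_mul x (m - M)
        rw [le_div_iff₀ (by linarith : (0:ℝ) < 1 - x)]
        nlinarith [pow_nonneg hx0 (m - M)]
      have e5 : 0 ≤ x ^ M := pow_nonneg hx0 M
      have hx2 : (0:ℝ) < 1 - x := by linarith
      calc ∑ i ∈ Finset.Ico M m, x ^ (i + 1)
          = ∑ j ∈ Finset.range (m - M), x ^ (M + j + 1) := e1
        _ ≤ x ^ M * ∑ j ∈ Finset.range (m - M), x ^ j := e3
        _ ≤ x ^ M * (1 / (1 - x)) := mul_le_mul_of_nonneg_left e4 e5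
        _ ≤ ((1 - x) / 2) * (1 / (1 - x)) :=
            mul_le_mul_of_nonneg_right hM.le (by positivity)
        _ = 1 / 2 := by
            have hne : (1 - x) ≠ 0 := ne_of_gt hx2
            field_simp
    have hprod : ∏ i ∈ Finset.range m, (1 - x ^ (i + 1))
        = c0 * ∏ i ∈ Finset.Ico M m, (1 - x ^ (i + 1)) := by
      rw [hc0, Finset.prod_range_mul_prod_Ico _ h]
    have hlow : 1 - ∑ i ∈ Finset.Ico M m, x ^ (i + 1)
        ≤ ∏ i ∈ Finset.Ico M m, (1 - x ^ (i + 1)) :=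
      aux_one_sub_sum_le_prod _ _ (fun i => pow_nonneg hx0 _) (fun i => by linarith [hfac i])
    have h12 : (1:ℝ)/2 ≤ ∏ i ∈ Finset.Ico M m, (1 - x ^ (i + 1)) := by linarith
    rw [hprod]
    nlinarith [mul_le_mul_of_nonneg_left h12 hc0pos.le]

lemma qPoch_self_eq (x : ℂ) (m : ℕ) :
    qPoch x x m = ∏ i ∈ Finset.range m, (1 - x ^ (i + 1)) := by
  unfold qPoch
  exact Finset.prod_congr rfl fun i _ => by rw [pow_succ']

lemma qPoch_lower {x : ℂ} (hx : ‖x‖ < 1) :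
    ∃ c : ℝ, 0 < c ∧ ∀ m : ℕ, c ≤ ‖qPoch x x m‖ := by
  obtain ⟨c, hc, hle⟩ := aux_exists_pos (norm_nonneg x) hx
  refine ⟨c, hc, fun m => (hle m).trans ?_⟩
  rw [qPoch_self_eq, norm_prod]
  apply Finset.prod_le_prod
  · intro i _
    have : ‖x‖ ^ (i+1) < 1 := pow_lt_one₀ (norm_nonneg x) hx (Nat.succ_ne_zero i)
    linarith
  · intro i _
    calc 1 - ‖x‖ ^ (i+1) = ‖(1:ℂ)‖ - ‖x ^ (i+1)‖ := by rw [norm_one, norm_pow]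
      _ ≤ ‖1 - x ^ (i+1)‖ := norm_sub_norm_le _ _

lemma qPoch_ne_zero_s16 {x : ℂ} (hx : ‖x‖ < 1) (m : ℕ) : qPoch x x m ≠ 0 := by
  obtain ⟨c, hc, hle⟩ := qPoch_lower hx
  intro h
  have h2 := hle m
  rw [h, norm_zero] at h2
  linarith

lemma qPoch_succ (x : ℂ) (N : ℕ) :
    qPoch x x (N + 1) = qPoch x x N * (1 - x ^ (N + 1)) := by
  rw [qPoch_self_eq, qPoch_self_eq, Finset.prod_range_succ]

/-- Key finite identity: `∑_{j=0}^N x^j/(x;x)_j = 1/(x;x)_N`. -/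
lemma key_sum {x : ℂ} (hx : ‖x‖ < 1) (N : ℕ) :
    ∑ j ∈ Finset.range (N + 1), x ^ j / qPoch x x j = 1 / qPoch x x N := by
  induction N with
  | zero => simp [qPoch]
  | succ N ih =>
    rw [Finset.sum_range_succ, ih, qPoch_succ]
    have h1 : qPoch x x N ≠ 0 := qPoch_ne_zero_s16 hx N
    have h2 : (1 - x ^ (N + 1)) ≠ 0 := by
      intro h
      exact qPoch_ne_zero_s16 hx (N + 1) (by rw [qPoch_succ, h, mul_zero])
    field_simp
    ring

noncomputable def Ff (u : ℂ) (k : ℤ) (p : ℕ × ℕ) : ℂ :=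
  (-((u ^ 2) ^ (-k))) ^ p.1 * tetTerm u (k - p.1 - 1) (k + p.1) p.2

noncomputable def Hf (u : ℂ) (k : ℤ) (p : ℕ × ℕ) : ℂ :=
  if (p.1 : ℤ) + k ≤ (p.2 : ℤ) then
    (-1 : ℂ) ^ ((p.2 : ℤ) - k) *
      u ^ ((p.2 : ℤ) ^ 2 + (p.2 : ℤ) - 4 * k * (p.2 : ℤ) + 2 * k ^ 2 + 2 * (p.1 : ℤ)) /
      (qPoch (u ^ 2) (u ^ 2) p.1 * qPoch (u ^ 2) (u ^ 2) p.2)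
  else 0

noncomputable def Kf (u : ℂ) (k : ℤ) (s : ℕ) : ℂ :=
  if k ≤ (s : ℤ) then
    (-1 : ℂ) ^ ((s : ℤ) - k) * u ^ ((s : ℤ) ^ 2 + (s : ℤ) - 4 * k * (s : ℤ) + 2 * k ^ 2) /
      (qPoch (u ^ 2) (u ^ 2) ((s : ℤ) - k).toNat * qPoch (u ^ 2) (u ^ 2) s)
  else 0

lemma Ff_eq_zero (u : ℂ) (k : ℤ) (n j : ℕ) (h : (j : ℤ) + k + n < 0) :
    Ff u k (n, j) = 0 := by
  unfold Ff tetTerm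
  rw [if_neg (by omega), mul_zero]

lemma sq_zpow (u : ℂ) (w : ℤ) : ((u ^ 2) : ℂ) ^ w = u ^ (2 * w) := by
  rw [show ((u:ℂ) ^ 2) = u ^ ((2:ℕ):ℤ) from (zpow_natCast u 2).symm, ← zpow_mul]
  norm_num

lemma Ff_eq (u : ℂ) (hu : u ≠ 0) (k : ℤ) (n j : ℕ) (h : 0 ≤ (j : ℤ) + k + n) :
    Ff u k (n, j) = (-1 : ℂ) ^ ((n : ℤ) + j) *
      u ^ (((n:ℤ)+j+k)^2 + ((n:ℤ)+j+k) - 4*k*((n:ℤ)+j+k) + 2*k^2 + 2*(j:ℤ)) /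
      (qPoch (u ^ 2) (u ^ 2) j * qPoch (u ^ 2) (u ^ 2) (((j:ℤ) + (k + (n:ℤ))).toNat)) := by
  unfold Ff tetTerm
  rw [if_pos (by omega)]
  have hneg : (-((u ^ 2) ^ (-k))) ^ n = (-1 : ℂ) ^ n * u ^ (-(2 * k * (n:ℤ))) := by
    rw [neg_pow]
    congr 1
    rw [← zpow_natCast ((u ^ 2) ^ (-k)) n, ← zpow_mul, sq_zpow]
    congr 1
    ring
  rw [hneg,
    show ((n:ℤ)+j+k)^2 + ((n:ℤ)+j+k) - 4*k*((n:ℤ)+j+k) + 2*k^2 + 2*(j:ℤ)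
      = -(2 * k * (n:ℤ)) + ((j : ℤ) * ((j : ℤ) + 1) - (2 * (j : ℤ) + (k + (n:ℤ))) * (k - (n:ℤ) - 1))
      from by ring,
    zpow_add₀ hu,
    show ((n:ℤ) + (j:ℤ)) = (((n + j : ℕ) : ℤ)) from by push_cast; ring,
    zpow_natCast, pow_add]
  ring

lemma norm_term_le (u : ℂ) (hu0 : 0 < ‖u‖) (hu1 : ‖u‖ < 1) (a E D : ℤ) (n j : ℕ)
    (P Q : ℂ) (c : ℝ) (hc : 0 < c) (hP : c ≤ ‖P‖) (hQ : c ≤ ‖Q‖)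
    (hE : D + n + j ≤ E) :
    ‖(-1 : ℂ) ^ a * u ^ E / (P * Q)‖ ≤ ‖u‖ ^ D / (c * c) * (‖u‖ ^ n * ‖u‖ ^ j) := by
  have hu : u ≠ 0 := by
    intro h; rw [h, norm_zero] at hu0; exact lt_irrefl _ hu0
  rw [norm_div, norm_mul, norm_mul, norm_zpow, norm_zpow]
  have h1 : ‖(-1 : ℂ)‖ = 1 := by norm_num
  rw [h1, one_zpow, one_mul]
  have hnum : ‖u‖ ^ E ≤ ‖u‖ ^ (D + (n : ℤ) + (j : ℤ)) :=
    zpow_le_zpow_right_of_le_one₀ hu0 hu1.le hE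
  have hden : c * c ≤ ‖P‖ * ‖Q‖ :=
    mul_le_mul hP hQ hc.le (norm_nonneg _)
  calc ‖u‖ ^ E / (‖P‖ * ‖Q‖) ≤ ‖u‖ ^ (D + (n : ℤ) + (j : ℤ)) / (c * c) := by
        apply div_le_div₀ (zpow_nonneg hu0.le _) hnum (by positivity) hden
    _ = ‖u‖ ^ D / (c * c) * (‖u‖ ^ n * ‖u‖ ^ j) := by
        rw [zpow_add₀ (ne_of_gt hu0), zpow_add₀ (ne_of_gt hu0), zpow_natCast, zpow_natCast]
        ring

lemma norm_usq_lt (u : ℂ) (hu1 : ‖u‖ < 1) : ‖(u ^ 2 : ℂ)‖ < 1 := by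
  rw [norm_pow]
  exact pow_lt_one₀ (norm_nonneg u) hu1 two_ne_zero

lemma summable_Ff (u : ℂ) (hu0 : 0 < ‖u‖) (hu1 : ‖u‖ < 1) (k : ℤ) :
    Summable (Ff u k) := by
  have hu : u ≠ 0 := by
    intro h; rw [h, norm_zero] at hu0; exact lt_irrefl _ hu0
  obtain ⟨c, hc, hcle⟩ := qPoch_lower (norm_usq_lt u hu1)
  apply Summable.of_norm
  have hg : Summable (fun p : ℕ × ℕ =>
      (‖u‖ ^ (k - 2 * k ^ 2) / (c * c)) * (‖u‖ ^ p.1 * ‖u‖ ^ p.2)) :=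
    (((summable_geometric_of_lt_one hu0.le hu1).mul_of_nonneg
      (summable_geometric_of_lt_one hu0.le hu1)
      (fun n => pow_nonneg hu0.le n) (fun n => pow_nonneg hu0.le n))).mul_left _
  apply Summable.of_nonneg_of_le (fun p => norm_nonneg _) _ hg
  rintro ⟨n, j⟩
  rcases lt_or_ge ((j : ℤ) + k + n) 0 with h | h
  · rw [Ff_eq_zero u k n j h, norm_zero]
    positivity
  · rw [Ff_eq u hu k n j h]
    exact norm_term_le u hu0 hu1 _ _ _ n j _ _ c hc (hcle j) (hcle _)
      (by nlinarith [sq_nonneg ((n : ℤ) + j + k - 2 * k), h])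

lemma summable_Hf (u : ℂ) (hu0 : 0 < ‖u‖) (hu1 : ‖u‖ < 1) (k : ℤ) :
    Summable (Hf u k) := by
  obtain ⟨c, hc, hcle⟩ := qPoch_lower (norm_usq_lt u hu1)
  apply Summable.of_norm
  have hg : Summable (fun p : ℕ × ℕ =>
      (‖u‖ ^ (-2 * k ^ 2) / (c * c)) * (‖u‖ ^ p.1 * ‖u‖ ^ p.2)) :=
    (((summable_geometric_of_lt_one hu0.le hu1).mul_of_nonneg
      (summable_geometric_of_lt_one hu0.le hu1)
      (fun n => pow_nonneg hu0.le n) (fun n => pow_nonneg hu0.le n))).mul_left _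
  apply Summable.of_nonneg_of_le (fun p => norm_nonneg _) _ hg
  rintro ⟨j, s⟩
  unfold Hf
  split_ifs with h
  · exact norm_term_le u hu0 hu1 _ _ _ j s _ _ c hc (hcle j) (hcle s)
      (by nlinarith [sq_nonneg ((s : ℤ) - 2 * k), h])
  · rw [norm_zero]
    positivity

lemma Hf_support (u : ℂ) (k : ℤ) (j s : ℕ) (h : Hf u k (j, s) ≠ 0) : (j : ℤ) + k ≤ s := by
  by_contra h3
  exact h (by unfold Hf; exact if_neg (by simpa using h3))

lemma Ff_support (u : ℂ) (k : ℤ) (n j : ℕ) (h : Ff u k (n, j) ≠ 0) : 0 ≤ (j : ℤ) + k + n := by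
  by_contra h3
  exact h (Ff_eq_zero u k n j (by omega))

lemma FH_eq (u : ℂ) (hu : u ≠ 0) (k : ℤ) (n j s : ℕ) (hs : (s : ℤ) = (n : ℤ) + j + k) :
    Ff u k (n, j) = Hf u k (j, s) := by
  rw [Ff_eq u hu k n j (by omega)]
  unfold Hf
  rw [if_pos (by simp only; omega)]
  simp only
  rw [show ((j : ℤ) + (k + (n : ℤ))).toNat = s from by omega,
    show (s : ℤ) - k = (n : ℤ) + (j : ℤ) from by omega,
    show (s : ℤ) ^ 2 + (s : ℤ) - 4 * k * (s : ℤ) + 2 * k ^ 2 + 2 * (j : ℤ)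
      = ((n:ℤ)+j+k)^2 + ((n:ℤ)+j+k) - 4*k*((n:ℤ)+j+k) + 2*k^2 + 2*(j:ℤ) from by
        rw [hs]]

lemma TK_eq (u : ℂ) (hu : u ≠ 0) (k : ℤ) (j' s : ℕ) (hs : (s : ℤ) = (j' : ℤ) + k) :
    u ^ k * tetTerm u k k j' = Kf u k s := by
  unfold tetTerm Kf
  rw [if_pos (by omega), if_pos (by omega)]
  rw [show ((j' : ℤ) + k).toNat = s from by omega,
    show ((s : ℤ) - k).toNat = j' from by omega,
    show (s : ℤ) - k = ((j' : ℕ) : ℤ) from by omega, zpow_natCast,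
    show (s : ℤ) ^ 2 + (s : ℤ) - 4 * k * (s : ℤ) + 2 * k ^ 2
      = k + ((j' : ℤ) * ((j' : ℤ) + 1) - (2 * (j' : ℤ) + k) * k) from by rw [hs]; ring,
    zpow_add₀ hu]
  ring

lemma tsum_Ff_eq_tsum_Hf (u : ℂ) (hu : u ≠ 0) (k : ℤ) (j : ℕ) :
    ∑' n, Ff u k (n, j) = ∑' s, Hf u k (j, s) := by
  rcases le_or_gt 0 ((j : ℤ) + k) with h | h
  · set t := ((j : ℤ) + k).toNat with ht
    have key : ∀ n, Ff u k (n, j) = Hf u k (j, n + t) := fun n =>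
      FH_eq u hu k n j (n + t) (by push_cast; omega)
    calc ∑' n, Ff u k (n, j) = ∑' n, Hf u k (j, n + t) := tsum_congr key
      _ = ∑' s, Hf u k (j, s) := by
          apply Function.Injective.tsum_eq (g := fun n : ℕ => n + t)
            (f := fun s => Hf u k (j, s)) (add_left_injective t)
          intro s hsupp
          have h2 : (j : ℤ) + k ≤ s := Hf_support u k j s (Function.mem_support.mp hsupp)
          exact ⟨s - t, by simp only; omega⟩
  · set t := (-((j : ℤ) + k)).toNat with ht
    have key : ∀ s, Hf u k (j, s) = Ff u k (s + t, j) := fun s =>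
      (FH_eq u hu k (s + t) j s (by push_cast; omega)).symm
    calc ∑' n, Ff u k (n, j)
        = ∑' s, Ff u k (s + t, j) := by
          symm
          apply Function.Injective.tsum_eq (g := fun s : ℕ => s + t)
            (f := fun n => Ff u k (n, j)) (add_left_injective t)
          intro n hsupp
          have h2 : 0 ≤ (j : ℤ) + k + n := Ff_support u k n j (Function.mem_support.mp hsupp)
          exact ⟨n - t, by simp only; omega⟩
      _ = ∑' s, Hf u k (j, s) := by rw [tsum_congr key]

lemma tsum_Hf_eq_Kf (u : ℂ) (hu0 : 0 < ‖u‖) (hu1 : ‖u‖ < 1) (k : ℤ) (s : ℕ) :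
    ∑' j, Hf u k (j, s) = Kf u k s := by
  have hu : u ≠ 0 := by
    intro h; rw [h, norm_zero] at hu0; exact lt_irrefl _ hu0
  have hx := norm_usq_lt u hu1
  rcases lt_or_ge (s : ℤ) k with h | h
  · have hz : ∀ j : ℕ, Hf u k (j, s) = 0 := fun j => by
      unfold Hf; exact if_neg (by simp only; omega)
    rw [tsum_congr hz, tsum_zero]
    unfold Kf
    rw [if_neg (by omega)]
  · set N := ((s : ℤ) - k).toNat with hN
    have hzero : ∀ j ∉ Finset.range (N + 1), Hf u k (j, s) = 0 := fun j hj => by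
      unfold Hf
      exact if_neg (by simp only [Finset.mem_range] at hj ⊢; omega)
    rw [tsum_eq_sum hzero]
    have hterm : ∀ j ∈ Finset.range (N + 1), Hf u k (j, s)
        = ((-1 : ℂ) ^ ((s : ℤ) - k) *
            u ^ ((s : ℤ) ^ 2 + (s : ℤ) - 4 * k * (s : ℤ) + 2 * k ^ 2) /
            qPoch (u ^ 2) (u ^ 2) s) * ((u ^ 2) ^ j / qPoch (u ^ 2) (u ^ 2) j) := by
      intro j hj
      unfold Hf
      rw [if_pos (by simp only [Finset.mem_range] at hj ⊢; omega)]
      simp only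
      rw [zpow_add₀ hu, show ((u ^ 2 : ℂ)) ^ j = u ^ (2 * (j : ℤ)) from by
        rw [← zpow_natCast ((u^2 : ℂ)) j, sq_zpow]]
      ring
    rw [Finset.sum_congr rfl hterm, ← Finset.mul_sum, key_sum hx N]
    unfold Kf
    rw [if_pos (by omega)]
    rw [div_mul_div_comm, mul_one, mul_comm (qPoch (u ^ 2) (u ^ 2) s) (qPoch (u ^ 2) (u ^ 2) N)]

lemma tetTerm_support (u : ℂ) (k : ℤ) (j : ℕ) (h : u ^ k * tetTerm u k k j ≠ 0) :
    0 ≤ (j : ℤ) + k := by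
  by_contra h3
  apply h
  unfold tetTerm
  rw [if_neg (by omega), mul_zero]

lemma Kf_support (u : ℂ) (k : ℤ) (s : ℕ) (h : Kf u k s ≠ 0) : k ≤ (s : ℤ) := by
  by_contra h3
  exact h (by unfold Kf; exact if_neg (by omega))

lemma tsum_Kf (u : ℂ) (hu : u ≠ 0) (k : ℤ) :
    ∑' s, Kf u k s = u ^ k * tetIndex u k k := by
  rw [tetIndex, ← tsum_mul_left]
  rcases le_or_gt 0 k with h | h
  · set t := k.toNat with ht
    have key : ∀ j', u ^ k * tetTerm u k k j' = Kf u k (j' + t) := fun j' =>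
      TK_eq u hu k j' (j' + t) (by push_cast; omega)
    calc ∑' s, Kf u k s
        = ∑' j', Kf u k (j' + t) := by
          symm
          apply Function.Injective.tsum_eq (g := fun j' : ℕ => j' + t)
            (f := fun s => Kf u k s) (add_left_injective t)
          intro s hsupp
          have h2 : k ≤ (s : ℤ) := Kf_support u k s (Function.mem_support.mp hsupp)
          exact ⟨s - t, by simp only; omega⟩
      _ = ∑' j', u ^ k * tetTerm u k k j' := by
          exact tsum_congr fun j' => (key j').symm
  · set t := (-k).toNat with ht
    have key : ∀ s, Kf u k s = u ^ k * tetTerm u k k (s + t) := fun s =>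
      (TK_eq u hu k (s + t) s (by push_cast; omega)).symm
    calc ∑' s, Kf u k s
        = ∑' s, u ^ k * tetTerm u k k (s + t) := tsum_congr key
      _ = ∑' j', u ^ k * tetTerm u k k j' := by
          apply Function.Injective.tsum_eq (g := fun s : ℕ => s + t)
            (f := fun j' => u ^ k * tetTerm u k k j') (add_left_injective t)
          intro j' hsupp
          have h2 : 0 ≤ (j' : ℤ) + k := tetTerm_support u k j' (Function.mem_support.mp hsupp)
          exact ⟨j' - t, by simp only; omega⟩

/-- `q^{k/2} I_Δ(k,k) = Σ_{n≥0} (-q^{-k})^n I_Δ(k-n-1, k+n)`, with `u = q^{1/2}`. -/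
theorem stmt_16 (u : ℂ) (hu0 : 0 < ‖u‖) (hu1 : ‖u‖ < 1) (q : ℂ) (hq : q = u ^ 2)
    (k : ℤ) :
    Summable (fun n : ℕ => (-(q ^ (-k))) ^ n * tetIndex u (k - n - 1) (k + n)) ∧
    ∑' n : ℕ, (-(q ^ (-k))) ^ n * tetIndex u (k - n - 1) (k + n) =
      u ^ k * tetIndex u k k := by
  subst hq
  have hu : u ≠ 0 := by
    intro h; rw [h, norm_zero] at hu0; exact lt_irrefl _ hu0
  have hSF := summable_Ff u hu0 hu1 k
  have hSH := summable_Hf u hu0 hu1 k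
  have hfib : ∀ n, Summable fun j => Ff u k (n, j) := fun n => hSF.prod_factor n
  have hfib2 : ∀ j, Summable fun n => Ff u k (n, j) := fun j => hSF.prod_symm.prod_factor j
  have hHfib : ∀ j, Summable fun s => Hf u k (j, s) := fun j => hSH.prod_factor j
  have hHfib2 : ∀ s, Summable fun j => Hf u k (j, s) := fun s => hSH.prod_symm.prod_factor s
  have hLHS : ∀ n : ℕ, (-((u ^ 2) ^ (-k))) ^ n * tetIndex u (k - n - 1) (k + n)
      = ∑' j, Ff u k (n, j) := by
    intro n
    rw [tetIndex, ← tsum_mul_left]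
    rfl
  have hsum1 : HasSum (fun n => ∑' j, Ff u k (n, j)) (∑' p, Ff u k p) :=
    hSF.hasSum.prod_fiberwise fun n => (hfib n).hasSum
  constructor
  · simp only [hLHS]
    exact hsum1.summable
  · calc ∑' n : ℕ, (-((u ^ 2) ^ (-k))) ^ n * tetIndex u (k - n - 1) (k + n)
        = ∑' n, ∑' j, Ff u k (n, j) := tsum_congr hLHS
      _ = ∑' j, ∑' n, Ff u k (n, j) :=
          (Summable.tsum_comm' (f := fun n j => Ff u k (n, j)) hSF hfib hfib2).symm
      _ = ∑' j, ∑' s, Hf u k (j, s) := tsum_congr fun j => tsum_Ff_eq_tsum_Hf u hu k j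
      _ = ∑' s, ∑' j, Hf u k (j, s) :=
          (Summable.tsum_comm' (f := fun j s => Hf u k (j, s)) hSH hHfib hHfib2).symm
      _ = ∑' s, Kf u k s := tsum_congr fun s => tsum_Hf_eq_Kf u hu0 hu1 k s
      _ = u ^ k * tetIndex u k k := tsum_Kf u hu k
end
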